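/- arXiv:1207.2747 — 4 statements merged into one kernel-verified Lean document; each statement's English description precedes it below -/
import Mathlib

section
/- Let f be holomorphic on a neighborhood of 0 in ℂ with f(0) = 0 and λ := f'(0) satisfying 0 < |λ| < 1. Then there exist r > 0 and an analytic function B on the open ball B(0,r) with B(0) = 0, B'(0) = 1, and B(f(z)) = λ·B(z) for all z ∈ B(0,r); moreover B(z) = lim_{n→∞} f^n(z)/λ^n, where the limit is uniform on B(0,r) and f^n denotes the n-fold iterate f∘f∘···∘f. -/
open Metric Set Filter

open Topology

set_option maxHeartbeats 1000000

/-- Koenigs linearization theorem. -/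
theorem koenigs_linearization (f : ℂ → ℂ) (U : Set ℂ) (hU : IsOpen U) (h0 : (0 : ℂ) ∈ U)
    (hf : AnalyticOnNhd ℂ f U) (hf0 : f 0 = 0)
    (hl0 : 0 < ‖deriv f 0‖) (hl1 : ‖deriv f 0‖ < 1) :
    ∃ r > 0, ∃ B : ℂ → ℂ, AnalyticOnNhd ℂ B (ball (0 : ℂ) r) ∧
      B 0 = 0 ∧ deriv B 0 = 1 ∧
      (∀ z ∈ ball (0 : ℂ) r, B (f z) = deriv f 0 * B z) ∧
      TendstoUniformlyOn (fun n z => f^[n] z / (deriv f 0) ^ n) B atTop (ball (0 : ℂ) r) := by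
  set l := deriv f 0 with hldef
  set a := ‖l‖ with hadef
  have hlne : l ≠ 0 := by
    intro h; rw [hadef, h] at hl0; simp at hl0
  have ha0 : 0 < a := hl0
  have ha1 : a < 1 := hl1
  have hsqa : a < Real.sqrt a := by
    have h := Real.sqrt_lt_sqrt (sq_nonneg a) (by nlinarith : a ^ 2 < a)
    rwa [Real.sqrt_sq ha0.le] at h
  have hsqa1 : Real.sqrt a < 1 := by
    rw [show (1 : ℝ) = Real.sqrt 1 by simp]
    exact Real.sqrt_lt_sqrt ha0.le ha1
  set ρ := (a + Real.sqrt a) / 2 with hρdef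
  have hρa : a < ρ := by rw [hρdef]; linarith
  have hρs : ρ < Real.sqrt a := by rw [hρdef]; linarith
  have hρ0 : 0 < ρ := lt_trans ha0 hρa
  have hρ1 : ρ < 1 := lt_trans hρs hsqa1
  have hρ2 : ρ ^ 2 < a := by
    have hs := Real.sq_sqrt ha0.le
    nlinarith
  clear_value ρ
  -- Taylor estimate
  obtain ⟨C, hC0, hCb⟩ : ∃ C > 0, ∀ᶠ z in 𝓝 (0 : ℂ),
      ‖f z - l * z‖ ≤ C * ‖z‖ ^ 2 := by
    obtain ⟨p, hp⟩ := hf 0 h0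
    have hO := hp.isBigO_sub_partialSum_pow 2
    have hc0 : (p 0 fun _ => 1) = 0 := by
      have := hp.coeff_zero fun _ => 1
      rwa [hf0] at this
    have hps : ∀ y : ℂ, p.partialSum 2 y = l * y := by
      intro y
      have h1 : p 1 (fun _ => y) = y • (p 1 fun _ => 1) := by
        have := (p 1).map_update_smul (fun _ => (1 : ℂ)) 0 y 1
        simpa using this
      have h2 : (p 0 fun _ => y) = (p 0 fun _ => 1) := by
        congr; funext i; exact absurd i.2 (by simp)
      rw [FormalMultilinearSeries.partialSum, Finset.sum_range_succ, Finset.sum_range_one]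
      rw [h2, hc0, h1, hldef, hp.deriv, smul_eq_mul]
      ring
    simp only [zero_add, hps] at hO
    obtain ⟨C, hC⟩ := hO.bound
    refine ⟨max C 1, lt_of_lt_of_le one_pos (le_max_right _ _), ?_⟩
    filter_upwards [hC] with z hz
    have h2 : (0 : ℝ) ≤ ‖z‖ ^ 2 := by positivity
    calc ‖f z - l * z‖ ≤ C * ‖z‖ ^ 2 := by
          simpa using hz
      _ ≤ max C 1 * ‖z‖ ^ 2 := by
          exact mul_le_mul_of_nonneg_right (le_max_left _ _) h2
  obtain ⟨r₁, hr₁, hb⟩ := Metric.eventually_nhds_iff_ball.mp hCb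
  obtain ⟨rU, hrU, hUball⟩ := Metric.isOpen_iff.mp hU 0 h0
  set r := min r₁ (min ((ρ - a) / C) rU) with hrdef
  have hr : 0 < r := by
    refine lt_min hr₁ (lt_min ?_ hrU)
    exact div_pos (by linarith) hC0
  have hrr₁ : r ≤ r₁ := min_le_left _ _
  have hrC : C * r ≤ ρ - a := by
    have : r ≤ (ρ - a) / C := le_trans (min_le_right _ _) (min_le_left _ _)
    rw [mul_comm]
    exact (le_div_iff₀ hC0).mp this
  have hblU : ball (0 : ℂ) r ⊆ U :=
    (ball_subset_ball (le_trans (min_le_right _ _) (min_le_right _ _))).trans hUball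
  clear_value r
  have hbound : ∀ z ∈ ball (0 : ℂ) r, ‖f z - l * z‖ ≤ C * ‖z‖ ^ 2 :=
    fun z hz => hb z (ball_subset_ball hrr₁ hz)
  have hfle : ∀ z ∈ ball (0 : ℂ) r, ‖f z‖ ≤ ρ * ‖z‖ := by
    intro z hz
    have hzr : ‖z‖ < r := by rwa [mem_ball_zero_iff] at hz
    have h2 := hbound z hz
    calc ‖f z‖ = ‖f z - l * z + l * z‖ := by ring_nf
      _ ≤ ‖f z - l * z‖ + ‖l * z‖ := norm_add_le _ _
      _ ≤ C * ‖z‖ ^ 2 + a * ‖z‖ := by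
          rw [norm_mul, ← hadef]; exact add_le_add h2 le_rfl
      _ ≤ (ρ - a) * ‖z‖ + a * ‖z‖ := by
          have h3 : C * ‖z‖ ≤ ρ - a :=
            le_trans (by nlinarith [norm_nonneg z] : C * ‖z‖ ≤ C * r) hrC
          nlinarith [norm_nonneg z]
      _ = ρ * ‖z‖ := by ring
  have hmem : ∀ z ∈ ball (0 : ℂ) r, f z ∈ ball (0 : ℂ) r := by
    intro z hz
    have hzr : ‖z‖ < r := by rwa [mem_ball_zero_iff] at hz
    rw [mem_ball_zero_iff]
    calc ‖f z‖ ≤ ρ * ‖z‖ := hfle z hz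
      _ ≤ ‖z‖ := by nlinarith [norm_nonneg z]
      _ < r := hzr
  have hiter : ∀ n : ℕ, ∀ z ∈ ball (0 : ℂ) r,
      f^[n] z ∈ ball (0 : ℂ) r ∧ ‖f^[n] z‖ ≤ ρ ^ n * ‖z‖ := by
    intro n
    induction n with
    | zero => intro z hz; simpa using hz
    | succ n ih =>
      intro z hz
      obtain ⟨h1, h2⟩ := ih z hz
      rw [Function.iterate_succ_apply']
      refine ⟨hmem _ h1, ?_⟩
      calc ‖f (f^[n] z)‖ ≤ ρ * ‖f^[n] z‖ := hfle _ h1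
        _ ≤ ρ * (ρ ^ n * ‖z‖) := by nlinarith
        _ = ρ ^ (n + 1) * ‖z‖ := by ring
  have hfix : ∀ n : ℕ, f^[n] (0 : ℂ) = 0 := fun n => Function.iterate_fixed hf0 n
  -- the series of differences
  set d : ℕ → ℂ → ℂ := fun n z => f^[n + 1] z / l ^ (n + 1) - f^[n] z / l ^ n with hddef
  set u : ℕ → ℝ := fun n => C * r ^ 2 / a * (ρ ^ 2 / a) ^ n with hudef
  have hu : Summable u := by
    apply Summable.mul_left
    apply summable_geometric_of_lt_one (by positivity)
    rw [div_lt_one ha0]; exact hρ2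
  have hd : ∀ n : ℕ, ∀ z ∈ ball (0 : ℂ) r, ‖d n z‖ ≤ u n := by
    intro n z hz
    have hzr : ‖z‖ ≤ r := by
      rw [mem_ball_zero_iff] at hz; exact hz.le
    obtain ⟨hw1, hw2⟩ := hiter n z hz
    have hwr : ‖f^[n] z‖ ≤ ρ ^ n * r := by
      calc ‖f^[n] z‖ ≤ ρ ^ n * ‖z‖ := hw2
        _ ≤ ρ ^ n * r := by nlinarith [pow_pos hρ0 n]
    have hbw := hbound (f^[n] z) hw1
    have heq : d n z = (f (f^[n] z) - l * f^[n] z) / l ^ (n + 1) := by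
      rw [hddef]
      simp only [Function.iterate_succ_apply']
      rw [pow_succ]
      field_simp
    rw [heq, norm_div, norm_pow, ← hadef]
    have key : C * (ρ ^ n * r) ^ 2 / a ^ (n + 1) = u n := by
      have e1 : (ρ ^ n * r) ^ 2 = (ρ ^ 2) ^ n * r ^ 2 := by
        rw [mul_pow, ← pow_mul, ← pow_mul, Nat.mul_comm]
      rw [hudef]
      show _ = C * r ^ 2 / a * (ρ ^ 2 / a) ^ n
      rw [e1, div_pow, pow_succ a n]
      field_simp
    rw [← key]
    have hnum : ‖f (f^[n] z) - l * f^[n] z‖ ≤ C * (ρ ^ n * r) ^ 2 := by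
      calc ‖f (f^[n] z) - l * f^[n] z‖ ≤ C * ‖f^[n] z‖ ^ 2 := hbw
        _ ≤ C * (ρ ^ n * r) ^ 2 :=
          mul_le_mul_of_nonneg_left
            (pow_le_pow_left₀ (norm_nonneg _) hwr 2) hC0.le
    gcongr
  -- uniform convergence
  have htsum := tendstoUniformlyOn_tsum_nat hu fun n x hx => hd n x hx
  have hid : TendstoUniformlyOn (fun (_ : ℕ) (z : ℂ) => z) (fun z => z) atTop
      (ball (0 : ℂ) r) := by
    rw [tendstoUniformlyOn_iff]
    intro ε hε
    filter_upwards with n x _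
    simpa using hε
  set B : ℂ → ℂ := fun z => z + ∑' n, d n z with hBdef
  have h2 := hid.add htsum
  have hteles : ∀ (N : ℕ) (z : ℂ), z + ∑ n ∈ Finset.range N, d n z = f^[N] z / l ^ N := by
    intro N z
    rw [hddef, Finset.sum_range_sub fun k => f^[k] z / l ^ k]
    simp only [Function.iterate_zero_apply, pow_zero, div_one]
    ring
  have htu : TendstoUniformlyOn (fun N z => f^[N] z / l ^ N) B atTop (ball (0 : ℂ) r) := by
    refine h2.congr ?_
    filter_upwards with N
    intro z _
    exact hteles N z
  -- differentiability of iterates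
  have hfd : DifferentiableOn ℂ f U := hf.differentiableOn
  have hitd : ∀ N : ℕ, DifferentiableOn ℂ f^[N] (ball (0 : ℂ) r) := by
    intro N
    induction N with
    | zero => simpa using differentiableOn_id
    | succ n ih =>
      rw [Function.iterate_succ']
      exact DifferentiableOn.comp hfd ih fun z hz => hblU (hiter n z hz).1
  have hφd : ∀ N : ℕ, DifferentiableOn ℂ (fun z => f^[N] z / l ^ N) (ball (0 : ℂ) r) :=
    fun N => (hitd N).div_const _
  have hBd : DifferentiableOn ℂ B (ball (0 : ℂ) r) :=
    htu.tendstoLocallyUniformlyOn.differentiableOn (Eventually.of_forall hφd) isOpen_ball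
  have hBan : AnalyticOnNhd ℂ B (ball (0 : ℂ) r) := hBd.analyticOnNhd isOpen_ball
  have h0mem : (0 : ℂ) ∈ ball (0 : ℂ) r := mem_ball_self hr
  -- B 0 = 0
  have hB0 : B 0 = 0 := by
    rw [hBdef]
    simp [hddef, hf0, hfix]
  -- deriv B 0 = 1
  have hBderiv : deriv B 0 = 1 := by
    have hder := (htu.tendstoLocallyUniformlyOn.deriv (Eventually.of_forall hφd)
      isOpen_ball).tendsto_at h0mem
    have hφderiv : ∀ N : ℕ, deriv (fun z => f^[N] z / l ^ N) 0 = 1 := by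
      intro N
      have hdN : deriv f^[N] 0 = l ^ N := by
        induction N with
        | zero => simp
        | succ n ih =>
          have hdg : DifferentiableAt ℂ f^[n] 0 :=
            (hitd n).differentiableAt (isOpen_ball.mem_nhds h0mem)
          have hdf : DifferentiableAt ℂ f (f^[n] 0) := by
            rw [hfix n]; exact (hf 0 h0).differentiableAt
          rw [Function.iterate_succ', deriv_comp 0 hdf hdg, hfix n, ← hldef, ih, pow_succ]
          ring
      rw [deriv_div_const, hdN, div_self (pow_ne_zero _ hlne)]
    have h3 : Tendsto (fun _ : ℕ => (1 : ℂ)) atTop (𝓝 (deriv B 0)) :=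
      hder.congr fun N => hφderiv N
    exact tendsto_nhds_unique h3 tendsto_const_nhds
  -- functional equation
  have hfeq : ∀ z ∈ ball (0 : ℂ) r, B (f z) = l * B z := by
    intro z hz
    have hfz : f z ∈ ball (0 : ℂ) r := hmem z hz
    have t1 : Tendsto (fun N => f^[N] (f z) / l ^ N) atTop (𝓝 (B (f z))) :=
      htu.tendsto_at hfz
    have t2 : Tendsto (fun N => f^[N] z / l ^ N) atTop (𝓝 (B z)) := htu.tendsto_at hz
    have t3 : Tendsto (fun N => f^[N + 1] z / l ^ (N + 1)) atTop (𝓝 (B z)) :=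
      t2.comp (tendsto_add_atTop_nat 1)
    have t4 : Tendsto (fun N => l * (f^[N + 1] z / l ^ (N + 1))) atTop (𝓝 (l * B z)) :=
      t3.const_mul l
    have heq : ∀ N : ℕ, l * (f^[N + 1] z / l ^ (N + 1)) = f^[N] (f z) / l ^ N := by
      intro N
      rw [Function.iterate_succ_apply, pow_succ]
      field_simp
    exact tendsto_nhds_unique t1 (t4.congr heq)
  exact ⟨r, hr, B, hBan, hB0, hBderiv, hfeq, htu⟩
end

section
/- Let m ≥ 2 be an integer, let 0 < δ < 1/2, and let f : ℂ → ℂ satisfy |f(z)| ≤ 2|z|^m for all z with |z| ≤ δ. Then f maps the closed ball of radius δ around 0 into itself, and for every n ≥ 1 and every z with |z| ≤ δ one has |f^n(z)| ≤ (2δ)^{m^n}. -/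
open Metric Set

/-- The iterate estimate from Gamelin's proof of Böttcher's theorem. -/
theorem gamelin_iterate_estimate (m : ℕ) (hm : 2 ≤ m) (δ : ℝ) (hδ0 : 0 < δ) (hδ : δ < 1 / 2)
    (f : ℂ → ℂ) (hf : ∀ z : ℂ, ‖z‖ ≤ δ → ‖f z‖ ≤ 2 * ‖z‖ ^ m) :
    MapsTo f (closedBall (0 : ℂ) δ) (closedBall (0 : ℂ) δ) ∧
      ∀ n : ℕ, 1 ≤ n → ∀ z : ℂ, ‖z‖ ≤ δ →
        ‖f^[n] z‖ ≤ (2 * δ) ^ (m ^ n) := by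
  have ha0 : (0:ℝ) < 2 * δ := by linarith
  have ha1 : 2 * δ < 1 := by linarith
  have h4 : (4:ℝ) ≤ 2 ^ m := by
    calc (4:ℝ) = 2 ^ 2 := by norm_num
      _ ≤ 2 ^ m := pow_le_pow_right₀ (by norm_num) hm
  have hbase : ∀ z : ℂ, ‖z‖ ≤ δ →
      ‖f z‖ ≤ (1/2) * (2*δ) ^ m := by
    intro z hz
    have h1 : ‖f z‖ ≤ 2 * δ ^ m := by
      calc ‖f z‖ ≤ 2 * ‖z‖ ^ m := hf z hz
        _ ≤ 2 * δ ^ m := by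
            gcongr
    calc ‖f z‖ ≤ 2 * δ ^ m := h1
      _ ≤ (1/2) * (2*δ) ^ m := by
          rw [mul_pow]
          have hδm : (0:ℝ) ≤ δ ^ m := by positivity
          nlinarith
  have hsmall : ∀ k : ℕ, 1 ≤ k → (1/2) * (2*δ) ^ (m ^ k) ≤ δ := by
    intro k hk
    have hmk : 1 ≤ m ^ k := Nat.one_le_pow _ _ (by omega)
    have : (2*δ) ^ (m ^ k) ≤ (2*δ) ^ 1 :=
      pow_le_pow_of_le_one ha0.le ha1.le hmk
    rw [pow_one] at this
    linarith
  have hmain : ∀ n : ℕ, ∀ z : ℂ, ‖z‖ ≤ δ →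
      ‖f^[n+1] z‖ ≤ (1/2) * (2*δ) ^ (m ^ (n+1)) := by
    intro n
    induction n with
    | zero =>
        intro z hz
        simpa [pow_one] using hbase z hz
    | succ n ih =>
        intro z hz
        have hw := ih z hz
        have hwδ : ‖f^[n+1] z‖ ≤ δ := hw.trans (hsmall (n+1) (by omega))
        rw [Function.iterate_succ_apply']
        calc ‖f (f^[n+1] z)‖ ≤ 2 * ‖f^[n+1] z‖ ^ m := hf _ hwδ
          _ ≤ 2 * ((1/2) * (2*δ) ^ (m ^ (n+1))) ^ m := by
              gcongr
          _ = 2 * (1/2) ^ m * (2*δ) ^ (m ^ (n+1) * m) := by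
              rw [mul_pow, ← pow_mul]; ring
          _ ≤ (1/2) * (2*δ) ^ (m ^ (n+2)) := by
              have : m ^ (n+1) * m = m ^ (n+2) := by ring
              rw [this]
              have hpos : (0:ℝ) ≤ (2*δ) ^ (m ^ (n+2)) := by positivity
              have h2m : 2 * (1/2:ℝ) ^ m ≤ 1/2 := by
                rw [div_pow, one_pow, mul_one_div, div_le_div_iff₀ (by positivity) (by norm_num)]
                linarith
              nlinarith
  constructor
  · intro z hz
    simp only [mem_closedBall, dist_zero_right] at hz ⊢
    have := (hbase z hz).trans (by simpa [pow_one] using hsmall 1 le_rfl)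
    exact this
  · intro n hn z hz
    obtain ⟨k, rfl⟩ : ∃ k, n = k + 1 := ⟨n - 1, by omega⟩
    have h := hmain k z hz
    have hpos : (0:ℝ) ≤ (2*δ) ^ (m ^ (k+1)) := by positivity
    linarith
end

section
/- Let σ ∈ ℝ and let Φ be a holomorphic function on the half-plane H = {Z ∈ ℂ : Re Z > σ} satisfying Φ(Z + 2πi) = Φ(Z) + 2πi for all Z ∈ H. Then there exists a holomorphic function φ on the region {z ∈ ℂ : |z| > e^σ} such that φ(exp Z) = exp(Φ(Z)) for all Z ∈ H. -/
open Complex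

private lemma milnor_per_int (σ : ℝ) (Φ : ℂ → ℂ)
    (hper : ∀ Z : ℂ, σ < Z.re →
      Φ (Z + 2 * Real.pi * Complex.I) = Φ Z + 2 * Real.pi * Complex.I) :
    ∀ (n : ℤ) (W : ℂ), σ < W.re →
      Φ (W + n * (2 * Real.pi * Complex.I)) = Φ W + n * (2 * Real.pi * Complex.I) := by
  have hre : ∀ (n : ℤ) (W : ℂ), (W + ((n : ℤ) : ℂ) * (2 * Real.pi * Complex.I)).re = W.re := by
    intro n W; simp
  intro n
  induction n using Int.induction_on with
  | zero => intro W hW; simp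
  | succ n ih =>
      intro W hW
      have h3 := ih W hW
      have h1 : W + (((n : ℤ) + 1 : ℤ) : ℂ) * (2 * Real.pi * Complex.I)
          = (W + ((n : ℤ) : ℂ) * (2 * Real.pi * Complex.I)) + 2 * Real.pi * Complex.I := by
        push_cast; ring
      rw [h1, hper _ (by rw [hre ((n:ℤ))]; exact hW), h3]
      push_cast; ring
  | pred n ih =>
      intro W hW
      have h3 := ih W hW
      have h2 := hper (W + ((-(n : ℤ) - 1 : ℤ) : ℂ) * (2 * Real.pi * Complex.I))
        (by rw [hre (-(n:ℤ)-1)]; exact hW)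
      have h1 : W + ((-(n : ℤ) : ℤ) : ℂ) * (2 * Real.pi * Complex.I)
          = (W + ((-(n : ℤ) - 1 : ℤ) : ℂ) * (2 * Real.pi * Complex.I))
            + 2 * Real.pi * Complex.I := by
        push_cast; ring
      rw [h1, h2] at h3
      push_cast at h3 ⊢
      linear_combination h3

/-- The descent step in Milnor's proof of Böttcher's theorem. -/
theorem milnor_descent (σ : ℝ) (Φ : ℂ → ℂ)
    (hΦ : DifferentiableOn ℂ Φ {Z : ℂ | σ < Z.re})
    (hper : ∀ Z : ℂ, σ < Z.re →
      Φ (Z + 2 * Real.pi * Complex.I) = Φ Z + 2 * Real.pi * Complex.I) :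
    ∃ φ : ℂ → ℂ, DifferentiableOn ℂ φ {z : ℂ | Real.exp σ < ‖z‖} ∧
      ∀ Z : ℂ, σ < Z.re → φ (Complex.exp Z) = Complex.exp (Φ Z) := by
  have hint := milnor_per_int σ Φ hper
  set S : Set ℂ := {z : ℂ | Real.exp σ < ‖z‖} with hS
  have hSopen : IsOpen S := isOpen_lt continuous_const continuous_norm
  have hHopen : IsOpen {Z : ℂ | σ < Z.re} := isOpen_lt continuous_const Complex.continuous_re
  set φ : ℂ → ℂ := fun z => Complex.exp (Φ (Complex.log z)) with hφ
  -- key lemma: exp ∘ Φ is well defined on fibers of exp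
  have key : ∀ W₁ W₂ : ℂ, σ < W₁.re → Complex.exp W₁ = Complex.exp W₂ →
      Complex.exp (Φ W₁) = Complex.exp (Φ W₂) := by
    intro W₁ W₂ h1 heq
    obtain ⟨n, hn⟩ := Complex.exp_eq_exp_iff_exists_int.mp heq
    have h2 : σ < W₂.re := by
      have : W₁.re = W₂.re := by rw [hn]; simp
      rwa [this] at h1
    rw [hn, hint n W₂ h2, Complex.exp_add, Complex.exp_int_mul_two_pi_mul_I, mul_one]
  have habs : ∀ z ∈ S, (0:ℝ) < ‖z‖ := fun z hz =>
    lt_trans (Real.exp_pos σ) hz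
  have hzne : ∀ z ∈ S, z ≠ 0 := by
    intro z hz h0
    simpa [h0] using habs z hz
  have hlogre : ∀ z ∈ S, σ < (Complex.log z).re := by
    intro z hz
    rw [Complex.log_re]
    exact (Real.lt_log_iff_exp_lt (habs z hz)).mpr hz
  refine ⟨φ, ?_, ?_⟩
  · rw [DifferentiableOn]
    intro z hz
    apply DifferentiableAt.differentiableWithinAt
    by_cases hslit : z ∈ Complex.slitPlane
    · exact (Complex.differentiableAt_exp.comp _
        ((hΦ.differentiableAt (hHopen.mem_nhds (hlogre z hz))).comp z
          (Complex.differentiableAt_log hslit)))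
    · -- z on the closed negative real axis; use the other branch
      have hslit' : -z ∈ Complex.slitPlane := by
        rw [Complex.mem_slitPlane_iff] at hslit ⊢
        push_neg at hslit
        obtain ⟨hre0, him0⟩ := hslit
        rcases lt_or_eq_of_le hre0 with h | h
        · left; simpa using h
        · exact absurd (Complex.ext (by simpa using h) (by simpa using him0)) (hzne z hz)
      set ψ : ℂ → ℂ := fun w => Complex.exp (Φ (Complex.log (-w) + Real.pi * Complex.I))
        with hψ
      have heqon : ∀ w ∈ S, φ w = ψ w := by
        intro w hw
        have hwne := hzne w hw
        have hWre : σ < (Complex.log (-w) + Real.pi * Complex.I).re := by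
          have h0 : (Complex.log (-w) + Real.pi * Complex.I).re = (Complex.log (-w)).re := by
            simp
          rw [h0, Complex.log_re]
          exact (Real.lt_log_iff_exp_lt (by simpa using habs w hw)).mpr (by simpa [hS] using hw)
        have hexp : Complex.exp (Complex.log (-w) + Real.pi * Complex.I)
            = Complex.exp (Complex.log w) := by
          rw [Complex.exp_add, Complex.exp_log (neg_ne_zero.mpr hwne), Complex.exp_log hwne,
            Complex.exp_pi_mul_I]
          ring
        exact (key _ _ hWre hexp).symm
      have hnhds : φ =ᶠ[nhds z] ψ :=
        Filter.eventuallyEq_of_mem (hSopen.mem_nhds hz) heqon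
      have hψdiff : DifferentiableAt ℂ ψ z := by
        have hlogw : DifferentiableAt ℂ (fun w : ℂ => Complex.log (-w)) z :=
          (Complex.differentiableAt_log hslit').comp z (differentiableAt_id.neg)
        have hWre : σ < (Complex.log (-z) + Real.pi * Complex.I).re := by
          have h0 : (Complex.log (-z) + Real.pi * Complex.I).re = (Complex.log (-z)).re := by
            simp
          rw [h0, Complex.log_re]
          exact (Real.lt_log_iff_exp_lt (by simpa using habs z hz)).mpr (by simpa [hS] using hz)
        exact Complex.differentiableAt_exp.comp _
          ((hΦ.differentiableAt (hHopen.mem_nhds hWre)).comp z (hlogw.add_const _))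
      exact hnhds.differentiableAt_iff.mpr hψdiff
  · intro Z hZ
    have hmem : Complex.exp Z ∈ S := by
      simp only [hS, Set.mem_setOf_eq, Complex.norm_exp]
      exact Real.exp_lt_exp.mpr hZ
    exact key _ _ (hlogre _ hmem) (Complex.exp_log (Complex.exp_ne_zero Z))
end

section
/- Let U ⊆ ℂ be open with f : U → U analytic, let λ ∈ ℂ with 0 < |λ| < 1, and let B be an analytic function on U with B(z) ≠ 0 for all z ∈ U and B(f(z)) = λ·B(z) on U. Let (c_n)_{n∈ℤ} be complex coefficients with c_0 = 0 such that for every z ∈ U the family (c_n·B(z)^n)_{n∈ℤ} is absolutely summable, and set F(z) := Σ_{n∈ℤ} c_n·B(z)^n. Then for each n ≠ 0 one has λ^n ≠ 1, the family (c_n·B(z)^n/(λ^n − 1))_{n∈ℤ, n≠0} is absolutely summable for every z ∈ U, and the function ψ(z) := Σ_{n≠0} c_n·B(z)^n/(λ^n − 1) satisfies ψ(f(z)) − ψ(z) = F(z) for all z ∈ U. -/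
open Set

lemma boettcher_pow_bound (l : ℂ) (hl0 : 0 < ‖l‖) (hl1 : ‖l‖ < 1)
    (n : ℤ) (hn : n ≠ 0) :
    min (1 - ‖l‖) ((‖l‖)⁻¹ - 1) ≤ ‖l ^ n - 1‖ := by
  have hln : ‖l ^ n‖ = ‖l‖ ^ n := norm_zpow l n
  rcases lt_or_gt_of_ne hn with h | h
  · -- n < 0 : |l^n| = |l|^n ≥ |l|⁻¹ > 1
    have h1 : (‖l‖)⁻¹ ≤ (‖l‖) ^ n := by
      rw [← zpow_neg_one]
      exact zpow_le_zpow_right_of_le_one₀ hl0 hl1.le (show n ≤ -1 by omega)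
    have := norm_sub_norm_le (l ^ n) 1
    simp only [norm_one, hln] at this
    calc min (1 - ‖l‖) ((‖l‖)⁻¹ - 1) ≤ (‖l‖)⁻¹ - 1 :=
          min_le_right _ _
      _ ≤ (‖l‖) ^ n - 1 := by linarith
      _ ≤ ‖l ^ n - 1‖ := this
  · -- n > 0 : |l^n| ≤ |l| < 1
    have h1 : (‖l‖) ^ n ≤ ‖l‖ := by
      simpa using zpow_le_zpow_right_of_le_one₀ hl0 hl1.le (show (1:ℤ) ≤ n by omega)
    have := norm_sub_norm_le 1 (l ^ n)
    simp only [norm_one, hln] at this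
    calc min (1 - ‖l‖) ((‖l‖)⁻¹ - 1) ≤ 1 - ‖l‖ :=
          min_le_left _ _
      _ ≤ 1 - (‖l‖) ^ n := by linarith
      _ ≤ ‖1 - l ^ n‖ := this
      _ = ‖l ^ n - 1‖ := by rw [← norm_neg, neg_sub]

set_option maxHeartbeats 1000000 in
/-- Böttcher's solution of the functional equation `ψ ∘ f − ψ = F`
via the Koenigs coordinate. -/
theorem boettcher_abel_type_equation (U : Set ℂ) (hU : IsOpen U)
    (f : ℂ → ℂ) (hf : AnalyticOnNhd ℂ f U) (hmap : MapsTo f U U)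
    (l : ℂ) (hl0 : 0 < ‖l‖) (hl1 : ‖l‖ < 1)
    (B : ℂ → ℂ) (hB : AnalyticOnNhd ℂ B U) (hBne : ∀ z ∈ U, B z ≠ 0)
    (hBeq : ∀ z ∈ U, B (f z) = l * B z)
    (c : ℤ → ℂ) (hc0 : c 0 = 0)
    (hsum : ∀ z ∈ U, Summable (fun n : ℤ => ‖c n * B z ^ n‖)) :
    (∀ n : ℤ, n ≠ 0 → l ^ n ≠ 1) ∧
    (∀ z ∈ U, Summable (fun n : {n : ℤ // n ≠ 0} =>
      ‖c n.1 * B z ^ n.1 / (l ^ n.1 - 1)‖)) ∧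
    (∀ z ∈ U,
      (∑' n : {n : ℤ // n ≠ 0}, c n.1 * B (f z) ^ n.1 / (l ^ n.1 - 1)) -
        (∑' n : {n : ℤ // n ≠ 0}, c n.1 * B z ^ n.1 / (l ^ n.1 - 1)) =
      ∑' n : ℤ, c n * B z ^ n) := by
  set ε := min (1 - ‖l‖) ((‖l‖)⁻¹ - 1) with hε
  have hεpos : 0 < ε := by
    apply lt_min (by linarith)
    have : 1 < (‖l‖)⁻¹ := (one_lt_inv₀ hl0).2 hl1
    linarith
  have hne : ∀ n : ℤ, n ≠ 0 → l ^ n ≠ 1 := by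
    intro n hn h
    have := boettcher_pow_bound l hl0 hl1 n hn
    rw [h, sub_self, norm_zero] at this
    linarith
  have hsub : ∀ z ∈ U, Summable (fun n : {n : ℤ // n ≠ 0} =>
      ‖c n.1 * B z ^ n.1 / (l ^ n.1 - 1)‖) := by
    intro z hz
    apply Summable.of_nonneg_of_le (fun n => by positivity)
      (f := fun n : {n : ℤ // n ≠ 0} => ε⁻¹ * ‖c n.1 * B z ^ n.1‖)
    · intro n
      rw [norm_div]
      calc ‖c n.1 * B z ^ n.1‖ / ‖l ^ n.1 - 1‖
          ≤ ‖c n.1 * B z ^ n.1‖ / ε :=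
            by
              apply div_le_div_of_nonneg_left (norm_nonneg _) hεpos
                (boettcher_pow_bound l hl0 hl1 n.1 n.2)
        _ = ε⁻¹ * ‖c n.1 * B z ^ n.1‖ := div_eq_inv_mul _ _
    · exact (((hsum z hz).mul_left ε⁻¹).subtype _)
  refine ⟨hne, hsub, fun z hz => ?_⟩
  have hsz : Summable (fun n : {n : ℤ // n ≠ 0} => c n.1 * B z ^ n.1 / (l ^ n.1 - 1)) := by
    apply Summable.of_norm
    exact hsub z hz
  have hsfz : Summable (fun n : {n : ℤ // n ≠ 0} => c n.1 * B (f z) ^ n.1 / (l ^ n.1 - 1)) := by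
    apply Summable.of_norm
    exact hsub (f z) (hmap hz)
  rw [← Summable.tsum_sub hsfz hsz]
  have hterm : ∀ n : {n : ℤ // n ≠ 0},
      c n.1 * B (f z) ^ n.1 / (l ^ n.1 - 1) - c n.1 * B z ^ n.1 / (l ^ n.1 - 1)
        = c n.1 * B z ^ n.1 := by
    intro n
    rw [hBeq z hz, mul_zpow, div_sub_div_same]
    rw [div_eq_iff (sub_ne_zero.2 (hne n.1 n.2))]
    ring
  calc (∑' n : {n : ℤ // n ≠ 0},
        (c n.1 * B (f z) ^ n.1 / (l ^ n.1 - 1) - c n.1 * B z ^ n.1 / (l ^ n.1 - 1)))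
      = ∑' n : {n : ℤ // n ≠ 0}, c n.1 * B z ^ n.1 := by
        exact tsum_congr hterm
    _ = ∑' n : ℤ, c n * B z ^ n := by
        have hsupp : Function.support (fun n : ℤ => c n * B z ^ n) ⊆ {n : ℤ | n ≠ 0} := by
          intro n hn
          simp only [Function.mem_support] at hn
          show n ≠ 0
          rintro rfl
          exact hn (by simp [hc0])
        exact tsum_subtype_eq_of_support_subset hsupp
end
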